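/- Let Λ be a row-finite strongly aperiodic k-graph with no sources, and give χ_Λ the topology generated by the sets S(v) = {χ ∈ χ_Λ : v ∈ χ}. Let C ⊆ χ_Λ be a nonempty closed set and write χ_C = ⋃_{χ ∈ C} χ. Then C is irreducible (i.e. C is not the union of two proper closed subsets of itself) if and only if χ_C is a maximal tail of Λ. -/

import Mathlib

set_option autoImplicit false

open scoped Classical

/-- A `k`-graph: a countable small category together with a degree functor
`d : Λ → ℕ^k` satisfying the unique factorization property.  Paths (morphisms)
form a single type; vertices (objects) are identified with the paths of
degree `0`. -/
structure KGraph (k : ℕ) where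
  /-- the type of paths (morphisms) of the `k`-graph -/
  Path : Type
  countable : Countable Path
  nonempty : Nonempty Path
  /-- the range (codomain) vertex of a path -/
  r : Path → Path
  /-- the source (domain) vertex of a path -/
  s : Path → Path
  /-- composition: `comp lam mu` is the path `λμ`, meaningful when `s lam = r mu` -/
  comp : Path → Path → Path
  /-- the degree functor -/
  d : Path → Fin k → ℕ
  d_r : ∀ lam, d (r lam) = 0
  d_s : ∀ lam, d (s lam) = 0
  r_r : ∀ lam, r (r lam) = r lam
  s_r : ∀ lam, s (r lam) = r lam
  r_s : ∀ lam, r (s lam) = s lam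
  s_s : ∀ lam, s (s lam) = s lam
  id_comp : ∀ lam, comp (r lam) lam = lam
  comp_id : ∀ lam, comp lam (s lam) = lam
  r_comp : ∀ lam mu, s lam = r mu → r (comp lam mu) = r lam
  s_comp : ∀ lam mu, s lam = r mu → s (comp lam mu) = s mu
  d_comp : ∀ lam mu, s lam = r mu → d (comp lam mu) = d lam + d mu
  comp_assoc : ∀ lam mu nu, s lam = r mu → s mu = r nu →
    comp (comp lam mu) nu = comp lam (comp mu nu)
  /-- the unique factorization property -/
  factor : ∀ lam (m n : Fin k → ℕ), d lam = m + n →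
    ∃! p : Path × Path, s p.1 = r p.2 ∧ comp p.1 p.2 = lam ∧ d p.1 = m ∧ d p.2 = n

namespace KGraph

variable {k : ℕ}

/-- `v` is a vertex, i.e. an element of `Λ⁰`. -/
def IsVertex (Λ : KGraph k) (v : Λ.Path) : Prop := Λ.d v = 0

/-- `v ≤ w`, i.e. `vΛw ≠ ∅`. -/
def Conn (Λ : KGraph k) (v w : Λ.Path) : Prop := ∃ lam, Λ.r lam = v ∧ Λ.s lam = w

/-- the canonical generator `e i` of `ℕ^k`. -/
def eVec (k : ℕ) (i : Fin k) : Fin k → ℕ := Pi.single i 1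

/-- `Λ` is row-finite: `vΛⁿ` is finite for every vertex `v` and `n ∈ ℕ^k`. -/
def RowFinite (Λ : KGraph k) : Prop :=
  ∀ v, Λ.IsVertex v → ∀ n : Fin k → ℕ, {lam | Λ.r lam = v ∧ Λ.d lam = n}.Finite

/-- `Λ` has no sources: `vΛ^{e i} ≠ ∅` for every vertex `v` and `i`. -/
def NoSources (Λ : KGraph k) : Prop :=
  ∀ v, Λ.IsVertex v → ∀ i : Fin k, ∃ lam, Λ.r lam = v ∧ Λ.d lam = eVec k i

/-- the middle factor `λ(m,n)`: the unique `σ` such that `λ = μστ` with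
`d μ = m`, `d σ = n - m`, `d τ = d λ - n` (junk value if no factorization exists). -/
noncomputable def seg (Λ : KGraph k) (lam : Λ.Path) (m n : Fin k → ℕ) : Λ.Path :=
  if h : ∃ sig, ∃ mu tau, Λ.s mu = Λ.r sig ∧ Λ.s sig = Λ.r tau ∧
      Λ.comp (Λ.comp mu sig) tau = lam ∧ Λ.d mu = m ∧ Λ.d sig = n - m ∧
      Λ.d tau = Λ.d lam - n
  then h.choose else lam

/-- `Λ` has no local periodicity at the vertex `v`. -/
def NoLocalPeriodicity (Λ : KGraph k) (v : Λ.Path) : Prop :=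
  ∀ m n : Fin k → ℕ, m ≠ n →
    ∃ lam, Λ.r lam = v ∧ m ⊔ n ≤ Λ.d lam ∧
      Λ.seg lam m (m + Λ.d lam - (m ⊔ n)) ≠ Λ.seg lam n (n + Λ.d lam - (m ⊔ n))

/-- `Λ` is aperiodic: no vertex has local periodicity. -/
def Aperiodic (Λ : KGraph k) : Prop := ∀ v, Λ.IsVertex v → Λ.NoLocalPeriodicity v

/-- a hereditary set of vertices -/
def Hereditary (Λ : KGraph k) (H : Set Λ.Path) : Prop :=
  ∀ v ∈ H, ∀ w, Λ.Conn v w → w ∈ H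

/-- a saturated set of vertices -/
def Saturated (Λ : KGraph k) (H : Set Λ.Path) : Prop :=
  ∀ v, Λ.IsVertex v → (∃ mu, Λ.r mu = v) →
    (∃ i : Fin k, ∀ lam, Λ.r lam = v → Λ.d lam = eVec k i → Λ.s lam ∈ H) → v ∈ H

/-- the saturation of a set of vertices: the smallest saturated set containing it -/
def saturation (Λ : KGraph k) (H : Set Λ.Path) : Set Λ.Path :=
  ⋂₀ {K : Set Λ.Path | H ⊆ K ∧ Λ.Saturated K}

/-- no local periodicity at the vertex `v` of the quotient graph `Γ(Λ \ H)`
(whose paths are the paths of `Λ` with source outside `H`). -/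
def QuotNoLocalPeriodicity (Λ : KGraph k) (H : Set Λ.Path) (v : Λ.Path) : Prop :=
  ∀ m n : Fin k → ℕ, m ≠ n →
    ∃ lam, Λ.r lam = v ∧ Λ.s lam ∉ H ∧ m ⊔ n ≤ Λ.d lam ∧
      Λ.seg lam m (m + Λ.d lam - (m ⊔ n)) ≠ Λ.seg lam n (n + Λ.d lam - (m ⊔ n))

/-- `Λ` is strongly aperiodic: `Γ(Λ \ H)` is aperiodic for every saturated
hereditary proper subset `H ⊊ Λ⁰`. -/
def StronglyAperiodic (Λ : KGraph k) : Prop :=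
  ∀ H : Set Λ.Path, (∀ v ∈ H, Λ.IsVertex v) → Λ.Hereditary H → Λ.Saturated H →
    H ≠ {v | Λ.IsVertex v} →
    ∀ v, Λ.IsVertex v → v ∉ H → Λ.QuotNoLocalPeriodicity H v

/-- a maximal tail -/
def MaximalTail (Λ : KGraph k) (γ : Set Λ.Path) : Prop :=
  γ.Nonempty ∧ (∀ v ∈ γ, Λ.IsVertex v) ∧
  (∀ v₁ ∈ γ, ∀ v₂ ∈ γ, ∃ w ∈ γ, Λ.Conn v₁ w ∧ Λ.Conn v₂ w) ∧
  (∀ v ∈ γ, ∀ i : Fin k, ∃ f, Λ.r f = v ∧ Λ.d f = eVec k i ∧ Λ.s f ∈ γ) ∧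
  (∀ v, Λ.IsVertex v → ∀ w ∈ γ, Λ.Conn v w → v ∈ γ)

end KGraph

namespace KGraph

variable {k : ℕ}

/-- An infinite path in `Λ`: a degree-preserving functor `x : Ω_k → Λ`,
recorded by its values `x(m,n)` for `m ≤ n` in `ℕ^k`. -/
structure InfinitePath (Λ : KGraph k) where
  toFun : (Fin k → ℕ) → (Fin k → ℕ) → Λ.Path
  d_eq : ∀ m n : Fin k → ℕ, m ≤ n → Λ.d (toFun m n) = n - m
  r_eq : ∀ m n : Fin k → ℕ, m ≤ n → Λ.r (toFun m n) = toFun m m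
  s_eq : ∀ m n : Fin k → ℕ, m ≤ n → Λ.s (toFun m n) = toFun n n
  comp_eq : ∀ m n p : Fin k → ℕ, m ≤ n → n ≤ p →
    Λ.comp (toFun m n) (toFun n p) = toFun m p

/-- `β(x) = {v ∈ Λ⁰ : vΛx(n,n) ≠ ∅ for some n ∈ ℕ^k}`. -/
def tailOf (Λ : KGraph k) (x : Λ.InfinitePath) : Set Λ.Path :=
  {v | Λ.IsVertex v ∧ ∃ n : Fin k → ℕ, Λ.Conn v (x.toFun n n)}

/-- the cylinder set `Z(μ) = {x ∈ Λ^∞ : x(0, d(μ)) = μ}`. -/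
def cyl (Λ : KGraph k) (mu : Λ.Path) : Set Λ.InfinitePath :=
  {x | x.toFun 0 (Λ.d mu) = mu}

/-- the topology on `Λ^∞` generated by the cylinder sets -/
instance instTopInfinitePath (Λ : KGraph k) : TopologicalSpace Λ.InfinitePath :=
  TopologicalSpace.generateFrom {U | ∃ mu : Λ.Path, U = Λ.cyl mu}

/-- `χ_Λ`, the set of maximal tails of `Λ` -/
def MaxTail (Λ : KGraph k) : Type := {γ : Set Λ.Path // Λ.MaximalTail γ}

/-- `S(v) = {χ ∈ χ_Λ : v ∈ χ}`. -/
def Sv (Λ : KGraph k) (v : Λ.Path) : Set Λ.MaxTail := {χ | v ∈ χ.1}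

/-- the topology on `χ_Λ` generated by the sets `S(v)`, `v ∈ Λ⁰` -/
instance instTopMaxTail (Λ : KGraph k) : TopologicalSpace Λ.MaxTail :=
  TopologicalSpace.generateFrom {U | ∃ v, Λ.IsVertex v ∧ U = Λ.Sv v}

end KGraph

namespace KGraph

variable {k : ℕ} {Λ : KGraph k}

/-- A degree-zero path is its own range and source. -/
lemma vertex_r_s {v : Λ.Path} (hv : Λ.IsVertex v) : Λ.r v = v ∧ Λ.s v = v := by
  have h := Λ.factor v 0 0 (by simpa [IsVertex] using hv)
  have h1 : ((Λ.r v, v) : Λ.Path × Λ.Path) = (v, Λ.s v) :=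
    h.unique ⟨Λ.s_r v, Λ.id_comp v, Λ.d_r v, hv⟩
      ⟨(Λ.r_s v).symm, Λ.comp_id v, hv, Λ.d_s v⟩
  exact ⟨congrArg Prod.fst h1, (congrArg Prod.snd h1).symm⟩

lemma conn_refl {v : Λ.Path} (hv : Λ.IsVertex v) : Λ.Conn v v :=
  ⟨v, (vertex_r_s hv).1, (vertex_r_s hv).2⟩

lemma conn_trans {u v w : Λ.Path} (h1 : Λ.Conn u v) (h2 : Λ.Conn v w) : Λ.Conn u w := by
  obtain ⟨lam, rl, sl⟩ := h1
  obtain ⟨mu, rm, sm⟩ := h2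
  have hs : Λ.s lam = Λ.r mu := by rw [sl, rm]
  exact ⟨Λ.comp lam mu, by rw [Λ.r_comp lam mu hs, rl], by rw [Λ.s_comp lam mu hs, sm]⟩

/-- In a maximal tail, every finite set of vertices connects to a common vertex. -/
lemma directed_tail {γ : Set Λ.Path} (hγ : Λ.MaximalTail γ) :
    ∀ F : Finset Λ.Path, ↑F ⊆ γ → ∃ w ∈ γ, ∀ v ∈ F, Λ.Conn v w := by
  intro F
  induction F using Finset.induction with
  | empty =>
    intro _
    obtain ⟨w, hw⟩ := hγ.1
    exact ⟨w, hw, fun v hv => absurd hv (by simp)⟩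
  | @insert v F hvF ih =>
    intro hF
    obtain ⟨w, hwγ, hw⟩ := ih (fun x hx => hF (Finset.mem_insert_of_mem hx))
    have hvγ : v ∈ γ := hF (Finset.mem_insert_self v F)
    obtain ⟨w', hw'γ, cvw', cww'⟩ := hγ.2.2.1 v hvγ w hwγ
    refine ⟨w', hw'γ, fun u hu => ?_⟩
    rcases Finset.mem_insert.mp hu with h | h
    · exact h ▸ cvw'
    · exact conn_trans (hw u h) cww'

/-- Every open set containing a point `χ₀` contains a basic neighbourhood
`⋂_{v ∈ F} S(v)` of `χ₀` for some finite `F ⊆ χ₀`. -/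
lemma nbhd_basic (χ₀ : Λ.MaxTail) :
    ∀ U : Set Λ.MaxTail, IsOpen U → χ₀ ∈ U →
      ∃ F : Finset Λ.Path, ↑F ⊆ χ₀.1 ∧
        ∀ χ : Λ.MaxTail, (∀ v ∈ F, v ∈ χ.1) → χ ∈ U := by
  intro U hU
  have h : TopologicalSpace.GenerateOpen {U | ∃ v, Λ.IsVertex v ∧ U = Λ.Sv v} U := hU
  clear hU
  induction h with
  | basic V hV =>
    intro hχ
    obtain ⟨v, hv, rfl⟩ := hV
    exact ⟨{v}, by simpa [Sv] using hχ, fun χ h => h v (Finset.mem_singleton_self v)⟩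
  | univ => exact fun _ => ⟨∅, by simp, fun χ _ => trivial⟩
  | inter U₁ U₂ h₁ h₂ ih₁ ih₂ =>
    intro hχ
    obtain ⟨F₁, hF₁, hU₁⟩ := ih₁ hχ.1
    obtain ⟨F₂, hF₂, hU₂⟩ := ih₂ hχ.2
    refine ⟨F₁ ∪ F₂, ?_, fun χ h => ⟨hU₁ χ (fun v hv => h v (Finset.mem_union_left _ hv)),
      hU₂ χ (fun v hv => h v (Finset.mem_union_right _ hv))⟩⟩
    rw [Finset.coe_union, Set.union_subset_iff]
    exact ⟨hF₁, hF₂⟩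
  | sUnion S hS ih =>
    intro hχ
    obtain ⟨V, hVS, hχV⟩ := hχ
    obtain ⟨F, hF, hV⟩ := ih V hVS hχV
    exact ⟨F, hF, fun χ h => ⟨V, hVS, hV χ h⟩⟩

lemma isOpen_Sv {v : Λ.Path} (hv : Λ.IsVertex v) : IsOpen (Λ.Sv v) :=
  TopologicalSpace.GenerateOpen.basic _ ⟨v, hv, rfl⟩

end KGraph

/-- A nonempty closed `C ⊆ χ_Λ` is irreducible iff `χ_C = ⋃_{χ ∈ C} χ` is a
maximal tail. -/
theorem stmt18 {k : ℕ} (Λ : KGraph k) (hrf : Λ.RowFinite) (hns : Λ.NoSources)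
    (hsa : Λ.StronglyAperiodic) (C : Set Λ.MaxTail) (hne : C.Nonempty)
    (hC : IsClosed C) :
    (¬ ∃ C₁ C₂ : Set Λ.MaxTail, IsClosed C₁ ∧ IsClosed C₂ ∧
        C₁ ⊆ C ∧ C₂ ⊆ C ∧ C₁ ≠ C ∧ C₂ ≠ C ∧ C = C₁ ∪ C₂) ↔
      Λ.MaximalTail (⋃ χ ∈ C, χ.1) := by
  set γ : Set Λ.Path := ⋃ χ ∈ C, χ.1 with hγdef
  have hmemγ : ∀ {v : Λ.Path}, v ∈ γ ↔ ∃ χ ∈ C, v ∈ χ.1 := by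
    intro v; simp [hγdef]
  constructor
  · -- irreducible → maximal tail
    intro hirr
    refine ⟨?_, ?_, ?_, ?_, ?_⟩
    · obtain ⟨χ₀, hχ₀⟩ := hne
      obtain ⟨v, hv⟩ := χ₀.2.1
      exact ⟨v, hmemγ.mpr ⟨χ₀, hχ₀, hv⟩⟩
    · intro v hv
      obtain ⟨χ, _, hvχ⟩ := hmemγ.mp hv
      exact χ.2.2.1 v hvχ
    · -- cofinality, using irreducibility
      intro v₁ hv₁ v₂ hv₂
      by_contra hcon
      push_neg at hcon
      set U₁ : Set Λ.MaxTail :=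
        ⋃ w ∈ {w | Λ.IsVertex w ∧ Λ.Conn v₁ w}, Λ.Sv w with hU₁def
      set U₂ : Set Λ.MaxTail :=
        ⋃ w ∈ {w | Λ.IsVertex w ∧ Λ.Conn v₂ w}, Λ.Sv w with hU₂def
      have hopen₁ : IsOpen U₁ := isOpen_biUnion (fun w hw => KGraph.isOpen_Sv hw.1)
      have hopen₂ : IsOpen U₂ := isOpen_biUnion (fun w hw => KGraph.isOpen_Sv hw.1)
      have hunion : C = (C \ U₁) ∪ (C \ U₂) := by
        apply Set.Subset.antisymm
        · intro χ hχC
          by_contra hout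
          have h₁ : χ ∈ U₁ := by
            by_contra h; exact hout (Or.inl ⟨hχC, h⟩)
          have h₂ : χ ∈ U₂ := by
            by_contra h; exact hout (Or.inr ⟨hχC, h⟩)
          obtain ⟨w₁, hw₁, hw₁χ⟩ := Set.mem_iUnion₂.mp h₁
          obtain ⟨w₂, hw₂, hw₂χ⟩ := Set.mem_iUnion₂.mp h₂
          obtain ⟨w, hwχ, cw₁, cw₂⟩ := χ.2.2.2.1 w₁ hw₁χ w₂ hw₂χ
          exact hcon w (hmemγ.mpr ⟨χ, hχC, hwχ⟩)
            (KGraph.conn_trans hw₁.2 cw₁) (KGraph.conn_trans hw₂.2 cw₂)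
        · exact Set.union_subset Set.diff_subset Set.diff_subset
      have hprop : ∀ (v : Λ.Path) (U : Set Λ.MaxTail), v ∈ γ →
          (⋃ w ∈ {w | Λ.IsVertex w ∧ Λ.Conn v w}, Λ.Sv w) = U → C \ U ≠ C := by
        intro v U hv hUdef hEq
        obtain ⟨χ, hχC, hvχ⟩ := hmemγ.mp hv
        have hvert : Λ.IsVertex v := χ.2.2.1 v hvχ
        have hχU : χ ∈ U := by
          rw [← hUdef]
          exact Set.mem_biUnion ⟨hvert, KGraph.conn_refl hvert⟩ hvχ
        have : χ ∈ C \ U := by rw [hEq]; exact hχC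
        exact this.2 hχU
      exact hirr ⟨C \ U₁, C \ U₂, hC.sdiff hopen₁, hC.sdiff hopen₂,
        Set.diff_subset, Set.diff_subset,
        hprop v₁ U₁ hv₁ hU₁def.symm, hprop v₂ U₂ hv₂ hU₂def.symm, hunion⟩
    · -- no-sources condition
      intro v hv i
      obtain ⟨χ, hχC, hvχ⟩ := hmemγ.mp hv
      obtain ⟨f, hrf', hdf, hsf⟩ := χ.2.2.2.2.1 v hvχ i
      exact ⟨f, hrf', hdf, hmemγ.mpr ⟨χ, hχC, hsf⟩⟩
    · -- hereditary-upwards condition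
      intro v hv w hw hconn
      obtain ⟨χ, hχC, hwχ⟩ := hmemγ.mp hw
      exact hmemγ.mpr ⟨χ, hχC, χ.2.2.2.2.2 v hv w hwχ hconn⟩
  · -- maximal tail → irreducible
    intro hmt
    set χγ : Λ.MaxTail := ⟨γ, hmt⟩ with hχγdef
    have hχγC : χγ ∈ C := by
      by_contra hnot
      obtain ⟨F, hFγ, hF⟩ := KGraph.nbhd_basic χγ Cᶜ hC.isOpen_compl hnot
      obtain ⟨w, hwγ, hw⟩ := KGraph.directed_tail hmt F hFγ
      obtain ⟨χ, hχC, hwχ⟩ := hmemγ.mp hwγ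
      have : χ ∈ Cᶜ := hF χ (fun v hv =>
        χ.2.2.2.2.2 v (hmt.2.1 v (hFγ hv)) w hwχ (hw v hv))
      exact this hχC
    rintro ⟨C₁, C₂, hcl₁, hcl₂, hs₁, hs₂, hne₁, hne₂, heq⟩
    have key : ∀ D : Set Λ.MaxTail, IsClosed D → χγ ∈ D → C ⊆ D := by
      intro D hclD hγD χ hχC
      by_contra hnot
      obtain ⟨F, hFχ, hF⟩ := KGraph.nbhd_basic χ Dᶜ hclD.isOpen_compl hnot
      have : χγ ∈ Dᶜ := hF χγ (fun v hv => hmemγ.mpr ⟨χ, hχC, hFχ hv⟩)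
      exact this hγD
    rcases (heq ▸ hχγC : χγ ∈ C₁ ∪ C₂) with h | h
    · exact hne₁ (Set.Subset.antisymm hs₁ (key C₁ hcl₁ h))
    · exact hne₂ (Set.Subset.antisymm hs₂ (key C₂ hcl₂ h))
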